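/- arXiv:2305.03786 — 2 statements merged into one kernel-verified Lean document; each statement's English description precedes it below -/
import Mathlib

section
/- Let κ > 0, K ≥ 0, and let A : [0,∞) → (ℝⁿ → ℝⁿ) be a family of linear maps, continuous in t, satisfying ⟨A(t)v, v⟩ ≥ κ‖v‖² for all t ≥ 0 and v ∈ ℝⁿ. Let r : [0,∞) → ℝⁿ be continuous with ‖r(t)‖ ≤ K e^{-κt} for all t ≥ 0, and let β : [0,∞) → ℝⁿ be differentiable with β(0) = 0 and β'(t) = -A(t)β(t) - r(t) for all t ≥ 0. Then ‖β(t)‖ ≤ K t e^{-κt} for all t ≥ 0. -/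
open Real

theorem stmt_8 (n : ℕ) (κ K : ℝ) (hκ : 0 < κ) (hK : 0 ≤ K)
    (A : ℝ → EuclideanSpace ℝ (Fin n) →L[ℝ] EuclideanSpace ℝ (Fin n))
    (hAcont : ContinuousOn A (Set.Ici 0))
    (hA : ∀ t ≥ (0 : ℝ), ∀ v : EuclideanSpace ℝ (Fin n),
      κ * ‖v‖ ^ 2 ≤ (inner ℝ (A t v) v : ℝ))
    (r : ℝ → EuclideanSpace ℝ (Fin n))
    (hrcont : ContinuousOn r (Set.Ici 0))
    (hr : ∀ t ≥ (0 : ℝ), ‖r t‖ ≤ K * exp (-κ * t))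
    (β : ℝ → EuclideanSpace ℝ (Fin n))
    (hβ0 : β 0 = 0)
    (hβ : ∀ t ≥ (0 : ℝ), HasDerivAt β (-(A t (β t)) - r t) t) :
    ∀ t ≥ (0 : ℝ), ‖β t‖ ≤ K * t * exp (-κ * t) := by
  classical
  have main : ∀ ε > (0:ℝ), ∀ t ≥ (0:ℝ), ‖β t‖ ≤ (K + ε) * t * exp (-κ * t) := by
    intro ε hε t ht
    set B : ℝ → ℝ := fun x => (K + ε) * x * exp (-κ * x) with hBdef
    set B' : ℝ → ℝ := fun x =>
      (K + ε) * exp (-κ * x) + (K + ε) * x * (exp (-κ * x) * (-κ)) with hB'def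
    have hBderiv : ∀ x, HasDerivAt B (B' x) x := by
      intro x
      have h1 : HasDerivAt (fun x : ℝ => (K + ε) * x) (K + ε) x := by
        simpa using (hasDerivAt_id x).const_mul (K + ε)
      have h2 : HasDerivAt (fun x : ℝ => exp (-κ * x)) (exp (-κ * x) * (-κ)) x := by
        have h3 : HasDerivAt (fun x : ℝ => -κ * x) (-κ) x := by
          simpa using (hasDerivAt_id x).const_mul (-κ)
        exact h3.exp
      exact h1.mul h2
    set D : ℝ → ℝ := fun x => if β x = 0 then ‖r x‖
      else (inner ℝ (-(A x (β x)) - r x) (β x) : ℝ) / ‖β x‖ with hDdef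
    have key : ∀ x ∈ Set.Icc (0:ℝ) t, ‖β x‖ ≤ B x := by
      apply image_norm_le_of_liminf_right_slope_norm_lt_deriv_boundary (f' := D)
      · intro x hx
        exact (hβ x hx.1).continuousAt.continuousWithinAt
      · -- liminf slope bound
        intro x hx ρ hρ
        have hd := hβ x hx.1
        by_cases h0 : β x = 0
        · have hρ' : ‖-(A x (β x)) - r x‖ < ρ := by
            have : ‖-(A x (β x)) - r x‖ = ‖r x‖ := by simp [h0]
            rw [this]
            simpa [hDdef, h0] using hρ
          exact hd.hasDerivWithinAt.liminf_right_slope_norm_le hρ'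
        · -- norm ∘ β is differentiable at x with derivative D x
          have hnorm_pos : (0:ℝ) < ‖β x‖ := norm_pos_iff.mpr h0
          have hinner : HasDerivAt (fun y => (inner ℝ (β y) (β y) : ℝ))
              ((inner ℝ (β x) (-(A x (β x)) - r x) : ℝ) +
               (inner ℝ (-(A x (β x)) - r x) (β x) : ℝ)) x :=
            HasDerivAt.inner ℝ hd hd
          have hne : (inner ℝ (β x) (β x) : ℝ) ≠ 0 := by
            rw [real_inner_self_eq_norm_mul_norm]
            positivity
          have hsqrt := hinner.sqrt hne
          have hfun : (fun y => Real.sqrt (inner ℝ (β y) (β y) : ℝ)) = norm ∘ β := by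
            funext y
            rw [real_inner_self_eq_norm_mul_norm]
            exact Real.sqrt_mul_self (norm_nonneg _)
          have hval : ((inner ℝ (β x) (-(A x (β x)) - r x) : ℝ) +
               (inner ℝ (-(A x (β x)) - r x) (β x) : ℝ)) /
              (2 * Real.sqrt (inner ℝ (β x) (β x) : ℝ)) = D x := by
            rw [real_inner_comm (-(A x (β x)) - r x) (β x),
              real_inner_self_eq_norm_mul_norm, Real.sqrt_mul_self (norm_nonneg _),
              ← two_mul, mul_div_mul_left _ _ (two_ne_zero (α := ℝ))]
            simp [hDdef, if_neg h0, mul_comm]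
          rw [hfun, hval] at hsqrt
          exact hsqrt.hasDerivWithinAt.liminf_right_slope_le hρ
      · simp [hβ0, hBdef]
      · intro x _
        exact (hBderiv x).continuousAt.continuousWithinAt
      · intro x _
        exact (hBderiv x).hasDerivWithinAt
      · -- bound at touch points
        intro x hx hxB
        by_cases h0 : β x = 0
        · have hx0 : x = 0 := by
            have hB0 : (K + ε) * x * exp (-κ * x) = 0 := by
              have := hxB
              rw [h0, norm_zero] at this
              exact this.symm
            have hepos := exp_pos (-κ * x)
            rcases mul_eq_zero.mp hB0 with h | h
            · rcases mul_eq_zero.mp h with h' | h'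
              · linarith
              · exact h'
            · exact absurd h (ne_of_gt hepos)
          subst hx0
          have hr0 := hr 0 le_rfl
          simp only [mul_zero, neg_zero, Real.exp_zero, mul_one] at hr0
          simp only [hDdef, hB'def, if_pos h0, mul_zero, neg_zero, zero_mul,
            Real.exp_zero, mul_one, add_zero]
          linarith
        · have hnorm_pos : (0:ℝ) < ‖β x‖ := norm_pos_iff.mpr h0
          have hx0 : (0:ℝ) ≤ x := hx.1
          have h3 : κ * ‖β x‖ ^ 2 ≤ (inner ℝ (A x (β x)) (β x) : ℝ) := hA x hx0 (β x)
          have h2 : -(inner ℝ (r x) (β x) : ℝ) ≤ K * exp (-κ * x) * ‖β x‖ := by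
            have habs : |(inner ℝ (r x) (β x) : ℝ)| ≤ ‖r x‖ * ‖β x‖ :=
              abs_real_inner_le_norm _ _
            have hrx := hr x hx0
            have : -(inner ℝ (r x) (β x) : ℝ) ≤ ‖r x‖ * ‖β x‖ := by
              have := neg_abs_le (inner ℝ (r x) (β x) : ℝ)
              linarith
            have := mul_le_mul_of_nonneg_right hrx (norm_nonneg (β x))
            linarith
          have hnum : (inner ℝ (-(A x (β x)) - r x) (β x) : ℝ) =
              -(inner ℝ (A x (β x)) (β x) : ℝ) - (inner ℝ (r x) (β x) : ℝ) := by
            rw [inner_sub_left, inner_neg_left]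
          simp only [hDdef, if_neg h0]
          rw [div_lt_iff₀ hnorm_pos]
          have e1 : ‖β x‖ ^ 2 = (K + ε) * x * exp (-κ * x) * ‖β x‖ := by
            rw [sq, hxB]
          have hepos := exp_pos (-κ * x)
          have hεe : 0 < ε * exp (-κ * x) * ‖β x‖ := by positivity
          simp only [hB'def]
          nlinarith [hnum, h3, h2, e1]
    exact key t ⟨ht, le_rfl⟩
  intro t ht
  rcases eq_or_lt_of_le ht with h | h
  · simp [← h, hβ0]
  · refine le_of_forall_pos_le_add ?_
    intro δ hδ
    have hte : 0 < t * exp (-κ * t) := mul_pos h (exp_pos _)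
    have hmain := main (δ / (t * exp (-κ * t))) (div_pos hδ hte) t ht
    have : (K + δ / (t * exp (-κ * t))) * t * exp (-κ * t) = K * t * exp (-κ * t) + δ := by
      field_simp
    linarith [hmain, this.le]
end

section
/- There exist universal constants C₁, C₂ > 0 with the following property. Let d ≥ 1, let γ_d be the standard Gaussian measure on ℝᵈ, let L ≥ 0, and let W : ℝᵈ → ℝ be Lipschitz with constant L such that μ = e^{-W}·γ_d is a probability measure which is centered (∫ x dμ(x) = 0). Let φ : ℝᵈ → ℝ be a convex differentiable function whose gradient ∇φ pushes γ_d forward to μ (i.e. ∇φ is the quadratic optimal transport / Brenier map from γ_d onto μ). Then for every x ∈ ℝᵈ, ‖∇φ(x)‖ ≤ C₁·exp(C₂·max(L, L²))·√(d + ‖x‖²). -/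
open MeasureTheory Real
open scoped RealInnerProductSpace ENNReal

/-- The standard Gaussian measure on `ℝᵈ`. -/
noncomputable def stdGaussian (d : ℕ) : Measure (EuclideanSpace ℝ (Fin d)) :=
  volume.withDensity fun x =>
    ENNReal.ofReal ((2 * π) ^ (-(d : ℝ) / 2) * exp (-‖x‖ ^ 2 / 2))

namespace Stmt19Aux

noncomputable abbrev dens (d : ℕ) (y : EuclideanSpace ℝ (Fin d)) : ℝ :=
  (2 * π) ^ (-(d : ℝ) / 2) * exp (-‖y‖ ^ 2 / 2)

lemma dens_pos (d : ℕ) (y : EuclideanSpace ℝ (Fin d)) : 0 < dens d y := by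
  have : (0:ℝ) < 2 * π := by positivity
  positivity

lemma measurable_dens (d : ℕ) : Measurable (fun y => ENNReal.ofReal (dens d y)) := by
  apply ENNReal.measurable_ofReal.comp
  exact (((measurable_norm.pow_const 2).neg.div_const 2).exp.const_mul _)

lemma stdGaussian_eq (d : ℕ) :
    stdGaussian d = volume.withDensity fun y => ENNReal.ofReal (dens d y) := rfl

lemma integrable_gauss (d : ℕ) {b : ℝ} (hb : 0 < b) :
    Integrable (fun v : EuclideanSpace ℝ (Fin d) => rexp (-b * ‖v‖^2)) := by
  have := GaussianFourier.integrable_cexp_neg_mul_sq_norm_add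
    (b := (b:ℂ)) (by simpa using hb) 0 (0 : EuclideanSpace ℝ (Fin d))
  apply this.norm.congr
  filter_upwards with v
  simp [Complex.norm_exp]
  left; norm_cast

lemma lint_gauss (d : ℕ) {b : ℝ} (hb : 0 < b) :
    ∫⁻ y : EuclideanSpace ℝ (Fin d), ENNReal.ofReal (rexp (-b * ‖y‖^2))
      = ENNReal.ofReal ((π/b) ^ ((d : ℝ)/2)) := by
  rw [← ofReal_integral_eq_lintegral_ofReal (integrable_gauss d hb)
    (Filter.Eventually.of_forall fun y => (exp_pos _).le)]
  congr 1
  rw [GaussianFourier.integral_rexp_neg_mul_sq_norm hb]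
  simp

lemma lint_gauss_const (d : ℕ) {b c : ℝ} (hb : 0 < b) (hc : 0 ≤ c) :
    ∫⁻ y : EuclideanSpace ℝ (Fin d), ENNReal.ofReal (c * rexp (-b * ‖y‖^2))
      = ENNReal.ofReal (c * (π/b) ^ ((d : ℝ)/2)) := by
  simp_rw [ENNReal.ofReal_mul hc]
  rw [lintegral_const_mul _ ?_, lint_gauss d hb]
  · exact (ENNReal.measurable_ofReal.comp
      ((measurable_norm.pow_const 2).const_mul (-b)).exp)

lemma stdGaussian_apply (d : ℕ) {S : Set (EuclideanSpace ℝ (Fin d))} (hS : MeasurableSet S) :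
    stdGaussian d S = ∫⁻ y in S, ENNReal.ofReal (dens d y) := by
  rw [stdGaussian_eq, withDensity_apply _ hS]

lemma stdGaussian_univ (d : ℕ) : stdGaussian d Set.univ = 1 := by
  rw [stdGaussian_apply d MeasurableSet.univ, Measure.restrict_univ]
  have h1 : ∀ y : EuclideanSpace ℝ (Fin d),
      dens d y = (2 * π) ^ (-(d : ℝ) / 2) * rexp (-(1/2) * ‖y‖^2) := by
    intro y; rw [dens]; ring_nf
  have h2π : (0:ℝ) < 2*π := by positivity
  simp_rw [h1]
  rw [lint_gauss_const d (by norm_num) (by positivity)]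
  have : π / (1/2) = 2 * π := by ring
  rw [this, ← Real.rpow_add h2π]
  norm_num
  rw [neg_div, neg_add_cancel, Real.rpow_zero]

lemma rpow_2pi_cancel (d : ℕ) :
    (2*π) ^ (-(d:ℝ)/2) * (π/(1/4)) ^ ((d:ℝ)/2) = rexp ((d:ℝ)/2 * Real.log 2) := by
  have h2π : (0:ℝ) < 2*π := by positivity
  have h4 : (π/(1/4) : ℝ) = (2*π) * 2 := by ring
  rw [h4, Real.mul_rpow h2π.le (by norm_num), ← mul_assoc, ← Real.rpow_add h2π,
    neg_div, neg_add_cancel, Real.rpow_zero, one_mul,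
    Real.rpow_def_of_pos (by norm_num)]
  ring_nf

/-- Gaussian tail bound. -/
lemma gauss_tail (d : ℕ) {t : ℝ} (ht : 0 ≤ t) :
    stdGaussian d {y | t ≤ ‖y‖} ≤ ENNReal.ofReal (rexp ((d:ℝ)/2 * Real.log 2 - t^2/4)) := by
  have hS : MeasurableSet {y : EuclideanSpace ℝ (Fin d) | t ≤ ‖y‖} :=
    measurableSet_le measurable_const measurable_norm
  rw [stdGaussian_apply d hS]
  have hpt : ∀ y ∈ {y : EuclideanSpace ℝ (Fin d) | t ≤ ‖y‖},
      ENNReal.ofReal (dens d y)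
        ≤ ENNReal.ofReal ((rexp (-t^2/4) * (2*π) ^ (-(d:ℝ)/2)) * rexp (-(1/4) * ‖y‖^2)) := by
    intro y hy
    apply ENNReal.ofReal_le_ofReal
    have hy' : t ≤ ‖y‖ := hy
    have hsq : t^2 ≤ ‖y‖^2 := by nlinarith [norm_nonneg y]
    rw [dens]
    have h2π : (0:ℝ) < 2*π := by positivity
    have hrp : (0:ℝ) ≤ (2*π) ^ (-(d:ℝ)/2) := Real.rpow_nonneg h2π.le _
    calc (2 * π) ^ (-(d : ℝ) / 2) * rexp (-‖y‖ ^ 2 / 2)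
        ≤ (2 * π) ^ (-(d : ℝ) / 2) * (rexp (-t^2/4) * rexp (-(1/4) * ‖y‖^2)) := by
          apply mul_le_mul_of_nonneg_left _ hrp
          rw [← Real.exp_add]
          apply Real.exp_le_exp.2
          nlinarith
      _ = (rexp (-t^2/4) * (2*π) ^ (-(d:ℝ)/2)) * rexp (-(1/4) * ‖y‖^2) := by ring
  calc ∫⁻ y in {y : EuclideanSpace ℝ (Fin d) | t ≤ ‖y‖}, ENNReal.ofReal (dens d y)
      ≤ ∫⁻ y in {y : EuclideanSpace ℝ (Fin d) | t ≤ ‖y‖},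
          ENNReal.ofReal ((rexp (-t^2/4) * (2*π) ^ (-(d:ℝ)/2)) * rexp (-(1/4) * ‖y‖^2)) :=
        setLIntegral_mono (by
          exact ENNReal.measurable_ofReal.comp
            ((((measurable_norm.pow_const 2).const_mul (-(1/4):ℝ)).exp).const_mul _)) hpt
    _ ≤ ∫⁻ y, ENNReal.ofReal ((rexp (-t^2/4) * (2*π) ^ (-(d:ℝ)/2)) * rexp (-(1/4) * ‖y‖^2)) :=
        setLIntegral_le_lintegral _ _
    _ = ENNReal.ofReal ((rexp (-t^2/4) * (2*π) ^ (-(d:ℝ)/2)) * (π/(1/4)) ^ ((d:ℝ)/2)) := by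
        apply lint_gauss_const d (by norm_num)
        positivity
    _ = ENNReal.ofReal (rexp ((d:ℝ)/2 * Real.log 2 - t^2/4)) := by
        congr 1
        rw [mul_assoc, rpow_2pi_cancel d, ← Real.exp_add]
        ring_nf

section Gradient

variable {E : Type*} [NormedAddCommGroup E] [InnerProductSpace ℝ E] [CompleteSpace E]

lemma inner_gradient_eq (φ : E → ℝ) (h : Differentiable ℝ φ) (p v : E) :
    ⟪gradient φ p, v⟫ = fderiv ℝ φ p v := by
  have h1 : HasFDerivAt φ ((InnerProductSpace.toDual ℝ E) (gradient φ p)) p :=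
    (hasGradientAt_iff_hasFDerivAt).1 (h p).hasGradientAt
  rw [h1.fderiv]
  simp

lemma grad_le_sub (φ : E → ℝ) (hc : ConvexOn ℝ Set.univ φ) (h : Differentiable ℝ φ)
    (a b : E) : ⟪gradient φ a, b - a⟫ ≤ φ b - φ a := by
  set g : ℝ → ℝ := fun t => φ (a + t • (b - a)) with hg
  have hgc : ConvexOn ℝ Set.univ g := by
    have := hc.comp_affineMap (AffineMap.lineMap a b)
    have hfun : φ ∘ ⇑(AffineMap.lineMap a b) = g := by
      funext t
      simp only [Function.comp, g, AffineMap.lineMap_apply_module]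
      congr 1
      module
    rw [hfun] at this
    simpa using this
  have hd : ∀ t : ℝ, HasDerivAt g (fderiv ℝ φ (a + t • (b - a)) (b - a)) t := by
    intro t
    have h1 : HasDerivAt (fun t : ℝ => a + t • (b - a)) (b - a) t := by
      simpa using ((hasDerivAt_id t).smul_const (b - a)).const_add a
    exact (h _).hasFDerivAt.comp_hasDerivAt t h1
  have key := hgc.le_slope_of_hasDerivAt (Set.mem_univ (0:ℝ)) (Set.mem_univ (1:ℝ))
    one_pos (by simpa using hd 0)
  have hs : slope g 0 1 = g 1 - g 0 := by simp [slope_def_field]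
  rw [inner_gradient_eq φ h]
  have : fderiv ℝ φ a (b - a) ≤ g 1 - g 0 := by rw [← hs]; simpa using key
  simpa [g] using this

lemma grad_mono (φ : E → ℝ) (hc : ConvexOn ℝ Set.univ φ) (h : Differentiable ℝ φ)
    (a b : E) : ⟪gradient φ a, b - a⟫ ≤ ⟪gradient φ b, b - a⟫ := by
  have h1 := grad_le_sub φ hc h a b
  have h2 := grad_le_sub φ hc h b a
  have h3 : ⟪gradient φ b, a - b⟫ = -⟪gradient φ b, b - a⟫ := by
    rw [← inner_neg_right]; congr 1; abel
  rw [h3] at h2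
  linarith

end Gradient

namespace Cube

lemma cube_volume (d : ℕ) (z : EuclideanSpace ℝ (Fin d)) (s : ℝ) (hs : 0 ≤ s) :
    volume ((MeasurableEquiv.toLp 2 (Fin d → ℝ)).symm ⁻¹'
      (Set.univ.pi fun i => Set.Icc (z i - s) (z i + s)))
      = ENNReal.ofReal (2*s) ^ d := by
  rw [(EuclideanSpace.volume_preserving_symm_measurableEquiv_toLp (Fin d)).measure_preimage
    ((MeasurableSet.univ_pi fun i => measurableSet_Icc).nullMeasurableSet)]
  rw [volume_pi_pi]
  simp [Real.volume_Icc]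
  ring_nf
  rw [ENNReal.ofReal_mul hs, mul_pow, ENNReal.ofReal_ofNat]

lemma cube_subset_ball (d : ℕ) (z y : EuclideanSpace ℝ (Fin d)) (s : ℝ) (hs : 0 ≤ s)
    (hy : y ∈ (MeasurableEquiv.toLp 2 (Fin d → ℝ)).symm ⁻¹'
      (Set.univ.pi fun i => Set.Icc (z i - s) (z i + s))) :
    ‖y - z‖ ≤ s * Real.sqrt d := by
  rw [EuclideanSpace.norm_eq]
  have h : Real.sqrt (∑ i, ‖(y - z) i‖^2) ≤ Real.sqrt (∑ i : Fin d, s^2) := by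
    apply Real.sqrt_le_sqrt
    apply Finset.sum_le_sum
    intro i _
    have h1 := hy i (Set.mem_univ i)
    simp at h1
    have : |y i - z i| ≤ s := by
      rw [abs_le]; constructor <;> [linarith [h1.1]; linarith [h1.2]]
    calc ‖(y - z) i‖^2 = |y i - z i|^2 := by simp [PiLp.sub_apply]
    _ ≤ s^2 := by nlinarith [abs_nonneg (y i - z i)]
  refine h.trans ?_
  rw [Finset.sum_const]
  simp [mul_comm]
  rw [Real.sqrt_sq hs]
  ring_nf
  exact le_refl _

lemma measurable_cube (d : ℕ) (z : EuclideanSpace ℝ (Fin d)) (s : ℝ) :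
    MeasurableSet ((MeasurableEquiv.toLp 2 (Fin d → ℝ)).symm ⁻¹'
      (Set.univ.pi fun i => Set.Icc (z i - s) (z i + s))) :=
  (MeasurableEquiv.toLp 2 (Fin d → ℝ)).symm.measurable
    (MeasurableSet.univ_pi fun i => measurableSet_Icc)

end Cube

section Mu

variable {d : ℕ} {L : ℝ} {W : EuclideanSpace ℝ (Fin d) → ℝ}

lemma mu_apply (hW : Measurable W) {S : Set (EuclideanSpace ℝ (Fin d))} (hS : MeasurableSet S) :
    ((stdGaussian d).withDensity fun y => ENNReal.ofReal (exp (-W y))) S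
      = ∫⁻ y in S, ENNReal.ofReal (dens d y * exp (-W y)) := by
  have hg : Measurable fun y : EuclideanSpace ℝ (Fin d) => ENNReal.ofReal (rexp (-W y)) :=
    ENNReal.measurable_ofReal.comp hW.neg.exp
  rw [withDensity_apply _ hS, stdGaussian_eq, restrict_withDensity hS,
    lintegral_withDensity_eq_lintegral_mul _ (measurable_dens d) hg]
  congr 1
  funext y
  simp only [Pi.mul_apply]
  rw [← ENNReal.ofReal_mul (dens_pos d y).le]

lemma W_le (hL : 0 ≤ L) (hW : LipschitzWith (Real.toNNReal L) W)
    (y : EuclideanSpace ℝ (Fin d)) : |W y - W 0| ≤ L * ‖y‖ := by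
  have h := hW.dist_le_mul y 0
  rw [Real.dist_eq, dist_zero_right, Real.coe_toNNReal L hL] at h
  exact h

lemma W0_bound (hd : 1 ≤ d) (hL : 0 ≤ L) (hW : LipschitzWith (Real.toNNReal L) W)
    (hprob : IsProbabilityMeasure
      ((stdGaussian d).withDensity fun x => ENNReal.ofReal (exp (-W x)))) :
    -W 0 ≤ Real.log 2 + 3 * L * Real.sqrt d := by
  have hd1 : (1:ℝ) ≤ (d:ℝ) := by exact_mod_cast hd
  set B : Set (EuclideanSpace ℝ (Fin d)) := {y | ‖y‖ ≤ 3 * Real.sqrt d} with hBdef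
  have hB : MeasurableSet B := measurableSet_le measurable_norm measurable_const
  have hl2 : Real.log 2 < 0.6931471808 := Real.log_two_lt_d9
  have hl2' : 0 < Real.log 2 := Real.log_pos one_lt_two
  have hBc : stdGaussian d Bᶜ ≤ ENNReal.ofReal (1/2) := by
    calc stdGaussian d Bᶜ ≤ stdGaussian d {y | 3 * Real.sqrt d ≤ ‖y‖} :=
          measure_mono (fun y hy => show 3 * Real.sqrt d ≤ ‖y‖ from le_of_not_ge (fun hle => hy hle))
      _ ≤ ENNReal.ofReal (rexp ((d:ℝ)/2 * Real.log 2 - (3 * Real.sqrt d)^2/4)) :=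
          gauss_tail d (by positivity)
      _ ≤ ENNReal.ofReal (1/2) := by
          apply ENNReal.ofReal_le_ofReal
          have hsq : (3 * Real.sqrt d)^2 = 9 * (d:ℝ) := by
            rw [mul_pow, Real.sq_sqrt (by positivity)]; ring
          rw [hsq]
          have h12 : (1/2 : ℝ) = rexp (-Real.log 2) := by
            rw [Real.exp_neg, Real.exp_log two_pos]; norm_num
          rw [h12]
          apply Real.exp_le_exp.2
          nlinarith
  have hBlow : ENNReal.ofReal (1/2) ≤ stdGaussian d B := by
    have hu : (1:ℝ≥0∞) ≤ stdGaussian d B + stdGaussian d Bᶜ := by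
      rw [← stdGaussian_univ d, ← Set.union_compl_self B]
      exact measure_union_le _ _
    have hu2 : (1:ℝ≥0∞) ≤ stdGaussian d B + ENNReal.ofReal (1/2) :=
      hu.trans (add_le_add_right hBc _)
    have h121 : (1:ℝ≥0∞) - ENNReal.ofReal (1/2) = ENNReal.ofReal (1/2) := by
      rw [← ENNReal.ofReal_one, ← ENNReal.ofReal_sub _ (by norm_num)]
      norm_num
    rw [← h121]
    exact tsub_le_iff_right.2 hu2
  have hmu_univ : ((stdGaussian d).withDensity fun y => ENNReal.ofReal (exp (-W y)))
      Set.univ = 1 := hprob.measure_univ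
  have hc : ∃ c : ℝ, c = rexp (-W 0 - 3 * L * Real.sqrt d) := ⟨_, rfl⟩
  obtain ⟨c, hc⟩ := hc
  have hkey : ENNReal.ofReal (c * (1/2)) ≤ 1 := by
    rw [← hmu_univ, mu_apply hW.continuous.measurable MeasurableSet.univ,
      Measure.restrict_univ]
    calc ENNReal.ofReal (c * (1/2)) = ENNReal.ofReal c * ENNReal.ofReal (1/2) := by
          rw [ENNReal.ofReal_mul (by rw [hc]; positivity)]
      _ ≤ ENNReal.ofReal c * stdGaussian d B := by
          exact mul_le_mul_right hBlow _
      _ = ENNReal.ofReal c * ∫⁻ y in B, ENNReal.ofReal (dens d y) := by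
          rw [stdGaussian_apply d hB]
      _ = ∫⁻ y in B, ENNReal.ofReal c * ENNReal.ofReal (dens d y) := by
          rw [lintegral_const_mul _ (measurable_dens d)]
      _ ≤ ∫⁻ y in B, ENNReal.ofReal (dens d y * exp (-W y)) := by
          apply setLIntegral_mono
          · exact ENNReal.measurable_ofReal.comp
              ((((measurable_norm.pow_const 2).neg.div_const 2).exp.const_mul _).mul
                hW.continuous.measurable.neg.exp)
          · intro y hy
            rw [← ENNReal.ofReal_mul (by rw [hc]; positivity)]
            apply ENNReal.ofReal_le_ofReal
            have h1 : |W y - W 0| ≤ L * ‖y‖ := W_le hL hW y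
            have h2 : ‖y‖ ≤ 3 * Real.sqrt d := hy
            have h3 : c ≤ rexp (-W y) := by
              rw [hc]
              apply Real.exp_le_exp.2
              have : L * ‖y‖ ≤ 3 * L * Real.sqrt d := by
                have := mul_le_mul_of_nonneg_left h2 hL
                nlinarith
              have := abs_le.1 h1
              linarith [this.2]
            calc c * dens d y ≤ rexp (-W y) * dens d y :=
                  mul_le_mul_of_nonneg_right h3 (dens_pos d y).le
              _ = dens d y * rexp (-W y) := by ring
      _ ≤ ∫⁻ y, ENNReal.ofReal (dens d y * exp (-W y)) := setLIntegral_le_lintegral _ _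
  have hreal : c * (1/2) ≤ 1 := ENNReal.ofReal_le_one.1 hkey
  have hc2 : c ≤ 2 := by linarith
  have h2e : (2:ℝ) = rexp (Real.log 2) := (Real.exp_log two_pos).symm
  rw [hc, h2e] at hc2
  have := Real.exp_le_exp.1 hc2
  linarith

lemma mu_tail (hd : 1 ≤ d) (hL : 0 ≤ L) (hW : LipschitzWith (Real.toNNReal L) W)
    (hprob : IsProbabilityMeasure
      ((stdGaussian d).withDensity fun x => ENNReal.ofReal (exp (-W x))))
    {t : ℝ} (ht : 0 ≤ t) :
    ((stdGaussian d).withDensity fun y => ENNReal.ofReal (exp (-W y))) {y | t ≤ ‖y‖}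
      ≤ ENNReal.ofReal (rexp (Real.log 2 + 3 * L * Real.sqrt d + 2 * L^2
          + (d:ℝ)/2 * Real.log 2 - t^2/8)) := by
  have hW0 : -W 0 ≤ Real.log 2 + 3 * L * Real.sqrt d := W0_bound hd hL hW hprob
  have hS : MeasurableSet {y : EuclideanSpace ℝ (Fin d) | t ≤ ‖y‖} :=
    measurableSet_le measurable_const measurable_norm
  rw [mu_apply hW.continuous.measurable hS]
  have h2π : (0:ℝ) < 2*π := by positivity
  have hrp : (0:ℝ) ≤ (2*π) ^ (-(d:ℝ)/2) := Real.rpow_nonneg h2π.le _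
  set c : ℝ := rexp (Real.log 2 + 3 * L * Real.sqrt d + 2 * L^2 - t^2/8) * (2*π) ^ (-(d:ℝ)/2)
    with hcdef
  calc ∫⁻ y in {y : EuclideanSpace ℝ (Fin d) | t ≤ ‖y‖},
        ENNReal.ofReal (dens d y * exp (-W y))
      ≤ ∫⁻ y in {y : EuclideanSpace ℝ (Fin d) | t ≤ ‖y‖},
          ENNReal.ofReal (c * rexp (-(1/4) * ‖y‖^2)) := by
        apply setLIntegral_mono
        · exact ENNReal.measurable_ofReal.comp
            (((measurable_norm.pow_const 2).const_mul (-(1/4):ℝ)).exp.const_mul _)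
        · intro y hy
          apply ENNReal.ofReal_le_ofReal
          have hy' : t ≤ ‖y‖ := hy
          have h1 := (abs_le.1 (W_le hL hW y)).1
          have h3 : rexp (-W y) ≤ rexp (Real.log 2 + 3 * L * Real.sqrt d + L * ‖y‖) := by
            apply Real.exp_le_exp.2; linarith
          have h4 : dens d y * rexp (-W y)
              ≤ (2*π) ^ (-(d:ℝ)/2)
                * (rexp (-‖y‖^2/2) * rexp (Real.log 2 + 3 * L * Real.sqrt d + L * ‖y‖)) := by
            rw [dens, mul_assoc]
            apply mul_le_mul_of_nonneg_left _ hrp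
            exact mul_le_mul_of_nonneg_left h3 (Real.exp_pos _).le
          refine h4.trans ?_
          rw [← Real.exp_add, hcdef]
          have h5 : rexp (-‖y‖ ^ 2 / 2 + (Real.log 2 + 3 * L * Real.sqrt d + L * ‖y‖))
              ≤ rexp (Real.log 2 + 3 * L * Real.sqrt d + 2 * L ^ 2 - t ^ 2 / 8)
                * rexp (-(1/4) * ‖y‖^2) := by
            rw [← Real.exp_add]
            apply Real.exp_le_exp.2
            nlinarith [sq_nonneg (‖y‖ - 4*L), norm_nonneg y]
          calc (2*π) ^ (-(d:ℝ)/2) * rexp (-‖y‖ ^ 2 / 2 + (Real.log 2 + 3 * L * Real.sqrt d + L * ‖y‖))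
              ≤ (2*π) ^ (-(d:ℝ)/2) * (rexp (Real.log 2 + 3 * L * Real.sqrt d + 2 * L ^ 2 - t ^ 2 / 8)
                  * rexp (-(1/4) * ‖y‖^2)) := mul_le_mul_of_nonneg_left h5 hrp
            _ = rexp (Real.log 2 + 3 * L * Real.sqrt d + 2 * L ^ 2 - t ^ 2 / 8) * (2*π) ^ (-(d:ℝ)/2)
                  * rexp (-(1/4) * ‖y‖^2) := by ring
    _ ≤ ∫⁻ y, ENNReal.ofReal (c * rexp (-(1/4) * ‖y‖^2)) := setLIntegral_le_lintegral _ _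
    _ = ENNReal.ofReal (c * (π/(1/4)) ^ ((d:ℝ)/2)) :=
        lint_gauss_const d (by norm_num) (by rw [hcdef]; positivity)
    _ = ENNReal.ofReal (rexp (Real.log 2 + 3 * L * Real.sqrt d + 2 * L^2
          + (d:ℝ)/2 * Real.log 2 - t^2/8)) := by
        congr 1
        rw [hcdef, mul_assoc, rpow_2pi_cancel d, ← Real.exp_add]
        ring_nf

end Mu

end Stmt19Aux

open Stmt19Aux Stmt19Aux.Cube

set_option maxHeartbeats 1000000 in
theorem stmt_19 : ∃ C₁ C₂ : ℝ, 0 < C₁ ∧ 0 < C₂ ∧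
    ∀ (d : ℕ), 1 ≤ d → ∀ (L : ℝ), 0 ≤ L →
    ∀ W : EuclideanSpace ℝ (Fin d) → ℝ, LipschitzWith (Real.toNNReal L) W →
    IsProbabilityMeasure ((stdGaussian d).withDensity fun x => ENNReal.ofReal (exp (-W x))) →
    (∫ x, x ∂((stdGaussian d).withDensity fun x => ENNReal.ofReal (exp (-W x)))) = 0 →
    ∀ φ : EuclideanSpace ℝ (Fin d) → ℝ, ConvexOn ℝ Set.univ φ → Differentiable ℝ φ →
    Measure.map (fun x => gradient φ x) (stdGaussian d) =
      (stdGaussian d).withDensity (fun x => ENNReal.ofReal (exp (-W x))) →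
    ∀ x, ‖gradient φ x‖ ≤ C₁ * exp (C₂ * max L (L ^ 2)) * sqrt (d + ‖x‖ ^ 2) := by
  refine ⟨200, 1, by norm_num, one_pos, ?_⟩
  intro d hd L hL W hW hprob _hcent φ hconv hdiff hmap x
  have hd1 : (1:ℝ) ≤ (d:ℝ) := by exact_mod_cast hd
  have hD1 : (1:ℝ) ≤ (d:ℝ) + ‖x‖^2 := by nlinarith [sq_nonneg ‖x‖]
  have hD0 : (0:ℝ) ≤ (d:ℝ) + ‖x‖^2 := by linarith
  rcases (norm_nonneg (gradient φ x)).eq_or_lt with hR0 | hR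
  · rw [← hR0]; positivity
  -- notation
  set D : ℝ := (d:ℝ) + ‖x‖^2 with hDdef
  set R : ℝ := ‖gradient φ x‖ with hRdef
  set M : ℝ := max L (L^2) with hMdef
  have hM0 : 0 ≤ M := le_trans hL (le_max_left _ _)
  have heM : 1 + L^2 ≤ rexp M := by
    have h1 : L^2 + 1 ≤ rexp (L^2) := Real.add_one_le_exp (L^2)
    have h2 : rexp (L^2) ≤ rexp M := Real.exp_le_exp.2 (le_max_right _ _)
    linarith
  have heM1 : 1 ≤ rexp M := by nlinarith [sq_nonneg L]
  suffices hfinal : R^2 ≤ (200 * rexp (1 * M))^2 * D by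
    have h200 : (0:ℝ) < 200 * rexp (1 * M) := by positivity
    calc R = Real.sqrt (R^2) := (Real.sqrt_sq (norm_nonneg _)).symm
      _ ≤ Real.sqrt ((200 * rexp (1 * M))^2 * D) := Real.sqrt_le_sqrt hfinal
      _ = 200 * rexp (1 * M) * Real.sqrt D := by
          rw [Real.sqrt_mul (by positivity), Real.sqrt_sq h200.le]
  -- geometry setup
  have hsdD : Real.sqrt (d:ℝ) ≤ Real.sqrt D := Real.sqrt_le_sqrt (by nlinarith [sq_nonneg ‖x‖])
  have hsD1 : (1:ℝ) ≤ Real.sqrt D := by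
    have : Real.sqrt 1 ≤ Real.sqrt D := Real.sqrt_le_sqrt hD1
    simpa using this
  have hsd0 : (0:ℝ) < Real.sqrt (d:ℝ) := Real.sqrt_pos.2 (by linarith)
  have hsd1 : (1:ℝ) ≤ Real.sqrt (d:ℝ) := by
    have : Real.sqrt 1 ≤ Real.sqrt (d:ℝ) := Real.sqrt_le_sqrt hd1
    simpa using this
  set r : ℝ := 10 * Real.sqrt D with hrdef
  have hr10 : 10 ≤ r := by nlinarith
  have hr0 : (0:ℝ) < r := by linarith
  set θ : EuclideanSpace ℝ (Fin d) := R⁻¹ • gradient φ x with hθdef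
  have hθ : ‖θ‖ = 1 := by
    rw [hθdef, norm_smul, Real.norm_eq_abs, abs_of_pos (inv_pos.2 hR), ← hRdef,
      inv_mul_cancel₀ hR.ne']
  set z : EuclideanSpace ℝ (Fin d) := x + ((3/2) * r) • θ with hzdef
  have hz : ‖z‖ ≤ ‖x‖ + (3/2) * r := by
    rw [hzdef]
    refine (norm_add_le _ _).trans ?_
    rw [norm_smul, hθ, Real.norm_eq_abs, abs_of_pos (by linarith)]
    simp
  set s : ℝ := r / (2 * Real.sqrt (d:ℝ)) with hsdef
  have hs0 : (0:ℝ) < s := by positivity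
  have h2s10 : 10 ≤ 2 * s := by
    rw [hsdef]
    rw [div_eq_mul_inv]
    have h1 : Real.sqrt D / Real.sqrt (d:ℝ) ≥ 1 := by
      rw [ge_iff_le, le_div_iff₀ hsd0]
      linarith
    have : 2 * (r * (2 * Real.sqrt (d:ℝ))⁻¹) = 10 * (Real.sqrt D / Real.sqrt (d:ℝ)) := by
      rw [hrdef]; field_simp
    rw [this]
    nlinarith
  have hsdr : s * Real.sqrt (d:ℝ) = r/2 := by
    rw [hsdef]; field_simp
  set C : Set (EuclideanSpace ℝ (Fin d)) :=
    (MeasurableEquiv.toLp 2 (Fin d → ℝ)).symm ⁻¹'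
      (Set.univ.pi fun i => Set.Icc (z i - s) (z i + s)) with hCdef
  -- geometry: on C the gradient is large
  have hgeom : ∀ y ∈ C, R/2 ≤ ‖gradient φ y‖ := by
    intro y hy
    have hyz : ‖y - z‖ ≤ r/2 := by
      have := cube_subset_ball d z y s hs0.le hy
      rwa [hsdr] at this
    have hsplit : y - x = ((3/2) * r) • θ + (y - z) := by
      rw [hzdef]; abel
    have hyx : ‖y - x‖ ≤ 2*r := by
      rw [hsplit]
      refine (norm_add_le _ _).trans ?_
      rw [norm_smul, hθ, Real.norm_eq_abs, abs_of_pos (by linarith)]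
      linarith
    have hTθ : ⟪gradient φ x, θ⟫ = R := by
      rw [hθdef, real_inner_smul_right, real_inner_self_eq_norm_sq, ← hRdef]
      field_simp
    have habs : |⟪gradient φ x, y - z⟫| ≤ R * (r/2) := by
      refine (abs_real_inner_le_norm _ _).trans ?_
      rw [← hRdef]
      exact mul_le_mul_of_nonneg_left hyz (norm_nonneg _)
    have hinner1 : r * R ≤ ⟪gradient φ x, y - x⟫ := by
      rw [hsplit, inner_add_right, real_inner_smul_right, hTθ]
      have := (abs_le.1 habs).1
      nlinarith
    have hmono := grad_mono φ hconv hdiff x y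
    have hcs : ⟪gradient φ y, y - x⟫ ≤ ‖gradient φ y‖ * ‖y - x‖ := real_inner_le_norm _ _
    nlinarith [norm_nonneg (gradient φ y)]
  -- measurability
  have hT : Measurable (fun y : EuclideanSpace ℝ (Fin d) => gradient φ y) := by
    have heq : (fun y : EuclideanSpace ℝ (Fin d) => gradient φ y)
        = fun y => (InnerProductSpace.toDual ℝ (EuclideanSpace ℝ (Fin d))).symm (fderiv ℝ φ y) :=
      rfl
    rw [heq]
    exact (LinearIsometryEquiv.continuous _).measurable.comp (measurable_fderiv ℝ φ)
  have hSball : MeasurableSet {w : EuclideanSpace ℝ (Fin d) | R/2 ≤ ‖w‖} :=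
    measurableSet_le measurable_const measurable_norm
  have hCmeas : MeasurableSet C := measurable_cube d z s
  -- lower bound for the Gaussian measure of the cube
  have h2π : (0:ℝ) < 2*π := by positivity
  have hrp : (0:ℝ) ≤ (2*π) ^ (-(d:ℝ)/2) := Real.rpow_nonneg h2π.le _
  have hlow : ENNReal.ofReal (rexp (-(‖x‖ + 2*r)^2/2)) ≤ stdGaussian d C := by
    have hbase : (1:ℝ) ≤ (2*π) ^ (-(1:ℝ)/2) * (2*s) := by
      have hpos : (0:ℝ) < (2*π) ^ ((1:ℝ)/2) := Real.rpow_pos_of_pos h2π _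
      have ha : (2*π) ^ ((1:ℝ)/2) ≤ 3 := by
        rw [← Real.sqrt_eq_rpow]
        have h9 : (2*π : ℝ) ≤ 9 := by nlinarith [Real.pi_le_four]
        calc Real.sqrt (2*π) ≤ Real.sqrt 9 := Real.sqrt_le_sqrt h9
          _ = 3 := by rw [show (9:ℝ) = 3^2 by norm_num, Real.sqrt_sq (by norm_num)]
      have hb : (2*π) ^ ((1:ℝ)/2) ≤ 2*s := by linarith
      have hneg : (2*π) ^ (-(1:ℝ)/2) = ((2*π) ^ ((1:ℝ)/2))⁻¹ := by
        rw [neg_div, Real.rpow_neg h2π.le]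
      rw [hneg]
      calc (1:ℝ) = ((2*π) ^ ((1:ℝ)/2))⁻¹ * (2*π) ^ ((1:ℝ)/2) := (inv_mul_cancel₀ hpos.ne').symm
        _ ≤ ((2*π) ^ ((1:ℝ)/2))⁻¹ * (2*s) := by
            exact mul_le_mul_of_nonneg_left hb (inv_nonneg.2 hpos.le)
    have hsplitp : (2*π) ^ (-(d:ℝ)/2) = ((2*π) ^ (-(1:ℝ)/2))^d := by
      rw [← Real.rpow_natCast ((2*π) ^ (-(1:ℝ)/2)) d, ← Real.rpow_mul h2π.le]
      congr 1
      push_cast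
      ring
    have hpow : (1:ℝ) ≤ ((2*π) ^ (-(1:ℝ)/2) * (2*s))^d := by
      calc (1:ℝ) = 1^d := (one_pow d).symm
        _ ≤ ((2*π) ^ (-(1:ℝ)/2) * (2*s))^d := pow_le_pow_left₀ (by norm_num) hbase d
    have hpt : ∀ y ∈ C, ENNReal.ofReal ((2*π) ^ (-(d:ℝ)/2) * rexp (-(‖x‖ + 2*r)^2/2))
        ≤ ENNReal.ofReal (dens d y) := by
      intro y hy
      apply ENNReal.ofReal_le_ofReal
      have hyz : ‖y - z‖ ≤ r/2 := by
        have := cube_subset_ball d z y s hs0.le hy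
        rwa [hsdr] at this
      have hyn : ‖y‖ ≤ ‖x‖ + 2*r := by
        calc ‖y‖ = ‖(y - z) + z‖ := by rw [sub_add_cancel]
          _ ≤ ‖y - z‖ + ‖z‖ := norm_add_le _ _
          _ ≤ ‖x‖ + 2*r := by linarith
      rw [dens]
      apply mul_le_mul_of_nonneg_left _ hrp
      apply Real.exp_le_exp.2
      nlinarith [norm_nonneg y, norm_nonneg x]
    calc ENNReal.ofReal (rexp (-(‖x‖ + 2*r)^2/2))
        ≤ ENNReal.ofReal (((2*π) ^ (-(d:ℝ)/2) * rexp (-(‖x‖ + 2*r)^2/2)) * (2*s)^d) := by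
          apply ENNReal.ofReal_le_ofReal
          rw [hsplitp]
          calc rexp (-(‖x‖ + 2*r)^2/2) = rexp (-(‖x‖ + 2*r)^2/2) * 1 := (mul_one _).symm
            _ ≤ rexp (-(‖x‖ + 2*r)^2/2) * (((2*π) ^ (-(1:ℝ)/2) * (2*s))^d) :=
                mul_le_mul_of_nonneg_left hpow (Real.exp_pos _).le
            _ = ((2*π) ^ (-(1:ℝ)/2))^d * rexp (-(‖x‖ + 2*r)^2/2) * (2*s)^d := by
                rw [mul_pow]; ring
      _ = ENNReal.ofReal ((2*π) ^ (-(d:ℝ)/2) * rexp (-(‖x‖ + 2*r)^2/2))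
            * ENNReal.ofReal (2*s) ^ d := by
          rw [ENNReal.ofReal_mul (by positivity), ENNReal.ofReal_pow (by positivity)]
      _ = ENNReal.ofReal ((2*π) ^ (-(d:ℝ)/2) * rexp (-(‖x‖ + 2*r)^2/2)) * volume C := by
          rw [hCdef, cube_volume d z s hs0.le]
      _ = ∫⁻ _ in C, ENNReal.ofReal ((2*π) ^ (-(d:ℝ)/2) * rexp (-(‖x‖ + 2*r)^2/2)) := by
          rw [setLIntegral_const]
      _ ≤ ∫⁻ y in C, ENNReal.ofReal (dens d y) := setLIntegral_mono (measurable_dens d) hpt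
      _ = stdGaussian d C := (stdGaussian_apply d hCmeas).symm
  -- upper bound chain
  have hchain : stdGaussian d C
      ≤ ((stdGaussian d).withDensity fun y => ENNReal.ofReal (exp (-W y))) {w | R/2 ≤ ‖w‖} := by
    rw [← hmap, Measure.map_apply hT hSball]
    exact measure_mono (fun y hy => hgeom y hy)
  have hup := mu_tail hd hL hW hprob (t := R/2) (by positivity)
  have hENN := (hlow.trans hchain).trans hup
  have hreal := (ENNReal.ofReal_le_ofReal_iff (Real.exp_pos _).le).1 hENN
  have hexp := Real.exp_le_exp.1 hreal
  clear_value D R M r s θ z C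
  clear hRdef hθdef hzdef hCdef hsdef hθ hz hsdr h2s10 hs0 hlow hchain hup hENN hreal hgeom
    hT hSball hCmeas hmap hprob _hcent hW hconv hdiff φ W θ z C s hrp h2π
  -- final arithmetic
  have hlog2 : Real.log 2 < 0.6931471808 := Real.log_two_lt_d9
  have hlog2' : (0:ℝ) < Real.log 2 := Real.log_pos one_lt_two
  have hxD : ‖x‖ ≤ Real.sqrt D := by
    rw [show ‖x‖ = Real.sqrt (‖x‖^2) from (Real.sqrt_sq (norm_nonneg x)).symm]
    exact Real.sqrt_le_sqrt (by nlinarith)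
  have hsqD : (Real.sqrt D)^2 = D := Real.sq_sqrt hD0
  have hsqd : (Real.sqrt (d:ℝ))^2 = (d:ℝ) := Real.sq_sqrt (by linarith)
  have hDd : (d:ℝ) ≤ D := by nlinarith [sq_nonneg ‖x‖]
  have h441 : (‖x‖ + 2*r)^2 ≤ 441 * D := by
    have h21 : ‖x‖ + 2*r ≤ 21 * Real.sqrt D := by rw [hrdef]; linarith
    have h0 : (0:ℝ) ≤ ‖x‖ + 2*r := by positivity
    calc (‖x‖ + 2*r)^2 ≤ (21 * Real.sqrt D)^2 := pow_le_pow_left₀ h0 h21 2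
      _ = 441 * D := by rw [mul_pow, hsqD]; norm_num
  have hLd : L * Real.sqrt (d:ℝ) ≤ (L^2 + D)/2 := by
    nlinarith [sq_nonneg (L - Real.sqrt (d:ℝ))]
  have hd2 : (d:ℝ)/2 * Real.log 2 ≤ D := by nlinarith
  have hkey : R^2 ≤ 32 + 112*L^2 + 7136*D := by
    linarith [hexp, h441, hLd, hd2, hlog2]
  have hprod : (1 + L^2) * D ≤ rexp M * rexp M * D := by
    have h1 : (1+L^2)*D ≤ rexp M * D := mul_le_mul_of_nonneg_right heM hD0
    have h2 : rexp M * D ≤ rexp M * rexp M * D := by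
      nlinarith [mul_nonneg (Real.exp_pos M).le hD0, heM1]
    linarith
  rw [one_mul]
  have hL2D : L^2 * 1 ≤ L^2 * D := mul_le_mul_of_nonneg_left hD1 (sq_nonneg L)
  have hfin1 : 32 + 112*L^2 + 7136*D ≤ 7248*((1+L^2)*D) := by
    linarith [hD1, hL2D, hD0, mul_nonneg (sq_nonneg L) hD0]
  have heq : (200*rexp M)^2 * D = 40000*(rexp M*rexp M*D) := by ring
  have hbig : 7248*(rexp M*rexp M*D) ≤ 40000*(rexp M*rexp M*D) := by
    have : (0:ℝ) ≤ rexp M*rexp M*D := by positivity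
    linarith
  linarith [hkey, hfin1, hprod, hbig, heq.ge, heq.le]
end
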